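/- arXiv:1911.13137 — 3 statements merged into one kernel-verified Lean document; each statement's English description precedes it below -/
import Mathlib

section
/- The 2×2 Hermitian matrix with diagonal entries (1 ± s(|p₁|²-|p₂|²))/2 and off-diagonal entries λ p₁ p̄₂ and λ p̄₁ p₂ is positive semidefinite for all unit vectors (p₁,p₂) ∈ ℂ² if and only if the real parameters satisfy |s| ≤ 1 and |λ| ≤ 1. -/
open Matrix ComplexOrder

lemma key_real_aux (a c bb t r0 r1 : ℝ) (ha : 0 ≤ a) (hc : 0 ≤ c) (hbb : 0 ≤ bb)
    (hb : bb ^ 2 ≤ a * c) (hr0 : 0 ≤ r0) (hr1 : 0 ≤ r1) (ht : |t| ≤ bb * r0 * r1) :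
    0 ≤ a * r0 ^ 2 + c * r1 ^ 2 + 2 * t := by
  have h1 : -(bb * r0 * r1) ≤ t := (abs_le.mp ht).1
  set sa := Real.sqrt a with hsa
  set sc := Real.sqrt c with hsc
  have ha2 : sa ^ 2 = a := Real.sq_sqrt ha
  have hc2 : sc ^ 2 = c := Real.sq_sqrt hc
  have hb' : bb ^ 2 ≤ (sa * sc) ^ 2 := by rw [mul_pow, ha2, hc2]; exact hb
  have hs : bb ≤ sa * sc := by
    nlinarith [mul_nonneg (Real.sqrt_nonneg a) (Real.sqrt_nonneg c)]
  rw [← ha2, ← hc2]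
  nlinarith [sq_nonneg (sa * r0 - sc * r1), mul_nonneg hr0 hr1,
    mul_nonneg (mul_nonneg hr0 hr1) (sub_nonneg.mpr hs)]

lemma psd2_aux (a c : ℝ) (b : ℂ) (ha : 0 ≤ a) (hc : 0 ≤ c)
    (hb : ‖b‖ ^ 2 ≤ a * c) :
    (Matrix.of ![![(a : ℂ), b], ![star b, (c : ℂ)]]).PosSemidef := by
  rw [Matrix.posSemidef_iff_dotProduct_mulVec]
  constructor
  · ext i j
    fin_cases i <;> fin_cases j <;>
      simp [Matrix.conjTranspose_apply, Complex.conj_ofReal]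
  · intro x
    simp only [dotProduct, Matrix.mulVec, Fin.sum_univ_two, Matrix.of_apply,
      Matrix.cons_val', Matrix.cons_val_zero, Matrix.cons_val_one, Matrix.head_cons,
      Matrix.head_fin_const, Matrix.empty_val', Matrix.cons_val_fin_one, Pi.star_apply]
    set x0 := x 0
    set x1 := x 1
    have h0 : (star x0 : ℂ) * x0 = ((‖x0‖ ^ 2 : ℝ) : ℂ) := by
      rw [Complex.star_def, ← Complex.normSq_eq_conj_mul_self, Complex.sq_norm]
    have h1 : (star x1 : ℂ) * x1 = ((‖x1‖ ^ 2 : ℝ) : ℂ) := by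
      rw [Complex.star_def, ← Complex.normSq_eq_conj_mul_self, Complex.sq_norm]
    have h2 : b * star x0 * x1 + star (b * star x0 * x1) = ((2 * (b * star x0 * x1).re : ℝ) : ℂ) :=
      Complex.add_conj _
    have hw : star (b * star x0 * x1) = star b * x0 * star x1 := by
      simp only [StarMul.star_mul, star_star]; ring
    have hform : star x0 * ((a:ℂ) * x0 + b * x1) + star x1 * (star b * x0 + (c:ℂ) * x1)
        = ((a * ‖x0‖ ^ 2 + c * ‖x1‖ ^ 2 + 2 * (b * star x0 * x1).re : ℝ) : ℂ) := by
      have expand : star x0 * ((a:ℂ) * x0 + b * x1) + star x1 * (star b * x0 + (c:ℂ) * x1)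
          = (a:ℂ) * (star x0 * x0) + (c:ℂ) * (star x1 * x1)
            + (b * star x0 * x1 + star (b * star x0 * x1)) := by
        rw [hw]; ring
      rw [expand, h0, h1, h2]; push_cast; ring
    rw [hform, Complex.zero_le_real]
    apply key_real_aux a c (‖b‖) _ (‖x0‖) (‖x1‖) ha hc
      (norm_nonneg b) hb (norm_nonneg _) (norm_nonneg _)
    calc |(b * star x0 * x1).re| ≤ ‖b * star x0 * x1‖ := Complex.abs_re_le_norm _
      _ = ‖b‖ * ‖x0‖ * ‖x1‖ := by
          simp [norm_mul, Complex.norm_conj]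

theorem stmt_6 (s l : ℝ) :
    (∀ p₁ p₂ : ℂ, ‖p₁‖ ^ 2 + ‖p₂‖ ^ 2 = 1 →
        (Matrix.of
          ![![(((1 + s * (‖p₁‖ ^ 2 - ‖p₂‖ ^ 2)) / 2 : ℝ) : ℂ),
              (l : ℂ) * p₁ * star p₂],
            ![(l : ℂ) * star p₁ * p₂,
              (((1 + s * (‖p₂‖ ^ 2 - ‖p₁‖ ^ 2)) / 2 : ℝ) : ℂ)]]).PosSemidef) ↔
      |s| ≤ 1 ∧ |l| ≤ 1 := by
  constructor
  · intro h
    have h10 := h 1 0 (by simp)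
    have e1 := h10.dotProduct_mulVec_nonneg ![1, 0]
    have e2 := h10.dotProduct_mulVec_nonneg ![0, 1]
    simp [dotProduct, Matrix.mulVec, Fin.sum_univ_two] at e1 e2
    norm_cast at e1 e2
    have hr : ‖((((Real.sqrt 2)⁻¹ : ℝ)) : ℂ)‖ ^ 2 = 1 / 2 := by
      rw [Complex.norm_real, Real.norm_eq_abs, ← abs_pow]
      norm_num [Real.sq_sqrt]
    have hrr := h (((Real.sqrt 2)⁻¹ : ℝ) : ℂ) (((Real.sqrt 2)⁻¹ : ℝ) : ℂ) (by rw [hr]; norm_num)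
    have f1 := hrr.dotProduct_mulVec_nonneg ![1, 1]
    have f2 := hrr.dotProduct_mulVec_nonneg ![1, -1]
    simp [dotProduct, Matrix.mulVec, Fin.sum_univ_two, hr, Complex.conj_ofReal] at f1 f2
    have h2 : ((Real.sqrt 2 : ℝ) : ℂ)⁻¹ * ((Real.sqrt 2 : ℝ) : ℂ)⁻¹ = 1 / 2 := by
      rw [← mul_inv]
      norm_cast
      rw [Real.mul_self_sqrt (by norm_num)]
      norm_num
    have f1' : (0 : ℂ) ≤ ((1 + l : ℝ) : ℂ) := by
      convert f1 using 1
      push_cast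
      linear_combination (-2 * l : ℂ) * h2
    have f2' : (0 : ℂ) ≤ ((1 - l : ℝ) : ℂ) := by
      convert f2 using 1
      push_cast
      linear_combination (2 * l : ℂ) * h2
    rw [Complex.zero_le_real] at f1' f2'
    rw [← Complex.ofReal_ofNat, ← Complex.ofReal_div, Complex.zero_le_real] at e1 e2
    constructor <;> rw [abs_le] <;> constructor <;> linarith
  · rintro ⟨hs, hl⟩ p₁ p₂ hp
    set A := ‖p₁‖ ^ 2 with hA'
    set B := ‖p₂‖ ^ 2 with hB'
    have hA : 0 ≤ A := sq_nonneg _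
    have hB : 0 ≤ B := sq_nonneg _
    obtain ⟨hs1, hs2⟩ := abs_le.mp hs
    obtain ⟨hl1, hl2⟩ := abs_le.mp hl
    have hl2' : l ^ 2 ≤ 1 := by nlinarith
    have hs2' : s ^ 2 ≤ 1 := by nlinarith
    have key := psd2_aux ((1 + s * (A - B)) / 2) ((1 + s * (B - A)) / 2) ((l : ℂ) * p₁ * star p₂)
      (by nlinarith [mul_nonneg (sub_nonneg.mpr hs2) hA,
        mul_nonneg (add_nonneg (by linarith : (0:ℝ) ≤ 1 + s) (le_refl 0)) hB])
      (by nlinarith)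
      (by
        have habs : ‖(l : ℂ) * p₁ * star p₂‖ ^ 2 = l ^ 2 * A * B := by
          simp only [norm_mul, Complex.norm_real, Real.norm_eq_abs, Complex.norm_conj, RCLike.star_def]
          rw [hA', hB', mul_pow, mul_pow, sq_abs]
        rw [habs]
        nlinarith [mul_nonneg (sub_nonneg.mpr hl2') (mul_nonneg hA hB),
          mul_nonneg (sub_nonneg.mpr hs2') (sq_nonneg (A - B))])
    convert key using 2
    ext i j
    fin_cases i <;> fin_cases j <;>
      simp [StarMul.star_mul, star_star, Complex.conj_ofReal, mul_comm, mul_assoc, mul_left_comm]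
end

section
/- A linear map Φ : M(d,ℂ) → M(d,ℂ) is completely positive if and only if its Choi matrix J(Φ) = Σ_{ij} E_{ij} ⊗ Φ(E_{ij}) is positive semidefinite. -/
open Matrix Kronecker ComplexOrder

section aux
variable {d : ℕ} (Φ : Matrix (Fin d) (Fin d) ℂ →ₗ[ℂ] Matrix (Fin d) (Fin d) ℂ)

private lemma choi_entry (i b j e : Fin d) :
    (∑ i' : Fin d, ∑ j' : Fin d,
      (Matrix.single i' j' (1 : ℂ)) ⊗ₖ Φ (Matrix.single i' j' (1 : ℂ)))
      (i, b) (j, e) = Φ (Matrix.single i j 1) b e := by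
  simp [Matrix.sum_apply, Matrix.kroneckerMap_apply, Matrix.single, ite_and,
    Finset.sum_ite_eq, Finset.sum_ite_eq']

private lemma Phi_entry_expand (X : Matrix (Fin d) (Fin d) ℂ) (b e : Fin d) :
    Φ X b e = ∑ i, ∑ j, X i j * Φ (Matrix.single i j 1) b e := by
  conv_lhs => rw [matrix_eq_sum_single X]
  have h : ∀ i j : Fin d, Matrix.single i j (X i j)
      = X i j • Matrix.single i j 1 := by
    intro i j; rw [Matrix.smul_single]; simp
  simp_rw [h, map_sum, _root_.map_smul, Matrix.sum_apply, Matrix.smul_apply, smul_eq_mul]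

private lemma sum_comm4 {ι₁ ι₂ ι₃ ι₄ : Type*} [Fintype ι₁] [Fintype ι₂] [Fintype ι₃] [Fintype ι₄]
    (f : ι₁ → ι₂ → ι₃ → ι₄ → ℂ) :
    ∑ i, ∑ j, ∑ k, ∑ r, f i j k r = ∑ k, ∑ r, ∑ i, ∑ j, f i j k r := by
  have h : (∑ p : ι₁ × ι₂, ∑ q : ι₃ × ι₄, f p.1 p.2 q.1 q.2)
      = ∑ q : ι₃ × ι₄, ∑ p : ι₁ × ι₂, f p.1 p.2 q.1 q.2 := Finset.sum_comm
  simpa [Fintype.sum_prod_type] using h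

private lemma psd_eq_conjTranspose_mul_self {m : Type*} [Fintype m] [DecidableEq m]
    {A : Matrix m m ℂ} (h : A.PosSemidef) : ∃ B : Matrix m m ℂ, A = Bᴴ * B := by
  open scoped MatrixOrder in
  obtain ⟨B, hB⟩ := CStarAlgebra.nonneg_iff_eq_star_mul_self.mp h.nonneg
  exact ⟨B, hB⟩

end aux

theorem stmt_11 {d : ℕ}
    (Φ : Matrix (Fin d) (Fin d) ℂ →ₗ[ℂ] Matrix (Fin d) (Fin d) ℂ) :
    (∀ n : ℕ, ∀ M : Matrix (Fin n × Fin d) (Fin n × Fin d) ℂ, M.PosSemidef →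
        (Matrix.of fun (p q : Fin n × Fin d) =>
          Φ (Matrix.of fun i j => M (p.1, i) (q.1, j)) p.2 q.2).PosSemidef) ↔
      (∑ i : Fin d, ∑ j : Fin d,
        (Matrix.single i j (1 : ℂ)) ⊗ₖ Φ (Matrix.single i j (1 : ℂ))).PosSemidef := by
  constructor
  · intro h
    -- apply hypothesis to the maximally entangled state
    set M : Matrix (Fin d × Fin d) (Fin d × Fin d) ℂ :=
      Matrix.of fun p q => (if p.1 = p.2 then (1 : ℂ) else 0) * (if q.1 = q.2 then 1 else 0)
        with hMdef
    have hM : M.PosSemidef := by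
      refine Matrix.posSemidef_iff_dotProduct_mulVec.mpr ⟨?_, ?_⟩
      · ext p q
        simp only [Matrix.conjTranspose_apply, hMdef, Matrix.of_apply]
        split_ifs <;> simp [mul_comm]
      · intro x
        have key : (star x) ⬝ᵥ (M *ᵥ x)
            = star (∑ a : Fin d, x (a, a)) * (∑ a : Fin d, x (a, a)) := by
          simp only [dotProduct, Matrix.mulVec, dotProduct, hMdef,
            Matrix.of_apply, Pi.star_apply]
          have hs : ∀ p : Fin d × Fin d,
              (∑ q : Fin d × Fin d,
                ((if p.1 = p.2 then (1 : ℂ) else 0) * if q.1 = q.2 then 1 else 0) * x q)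
              = (if p.1 = p.2 then (1 : ℂ) else 0) * ∑ a : Fin d, x (a, a) := by
            intro p
            rw [Fintype.sum_prod_type, Finset.mul_sum]
            refine Finset.sum_congr rfl fun a _ => ?_
            simp [mul_ite, ite_mul, mul_zero, mul_one, zero_mul, one_mul,
              Finset.sum_ite_eq, Finset.sum_ite_eq']
          simp_rw [hs]
          rw [star_sum, Finset.sum_mul, Fintype.sum_prod_type]
          refine Finset.sum_congr rfl fun a _ => ?_
          simp [ite_mul, mul_ite, Finset.sum_ite_eq, mul_comm, mul_left_comm, mul_assoc]
        rw [key]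
        exact star_mul_self_nonneg _
    have h2 := h d M hM
    have heq : (∑ i : Fin d, ∑ j : Fin d,
        (Matrix.single i j (1 : ℂ)) ⊗ₖ Φ (Matrix.single i j (1 : ℂ)))
        = Matrix.of fun (p q : Fin d × Fin d) =>
          Φ (Matrix.of fun i j => M (p.1, i) (q.1, j)) p.2 q.2 := by
      ext ⟨p1, p2⟩ ⟨q1, q2⟩
      rw [choi_entry]
      simp only [Matrix.of_apply]
      have hb : (Matrix.of fun i j => M (p1, i) (q1, j))
          = Matrix.single p1 q1 (1 : ℂ) := by
        ext i j
        by_cases h1 : p1 = i <;> by_cases h2 : q1 = j <;>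
          simp [hMdef, Matrix.single, h1, h2]
      rw [hb]
    rw [heq]
    exact h2
  · intro hC n M hM
    obtain ⟨A, hA⟩ := psd_eq_conjTranspose_mul_self hM
    obtain ⟨L, hL⟩ := psd_eq_conjTranspose_mul_self hC
    set B : Matrix ((Fin n × Fin d) × (Fin d × Fin d)) (Fin n × Fin d) ℂ :=
      Matrix.of fun kr p => ∑ i, A kr.1 (p.1, i) * L kr.2 (i, p.2) with hBdef
    have key : (Matrix.of fun (p q : Fin n × Fin d) =>
        Φ (Matrix.of fun i j => M (p.1, i) (q.1, j)) p.2 q.2) = Bᴴ * B := by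
      ext p q
      simp only [Matrix.of_apply]
      rw [Phi_entry_expand]
      simp only [Matrix.of_apply]
      have hMe : ∀ i j : Fin d, M (p.1, i) (q.1, j)
          = ∑ k, star (A k (p.1, i)) * A k (q.1, j) := by
        intro i j; rw [hA]; simp [Matrix.mul_apply, Matrix.conjTranspose_apply]
      have hPe : ∀ i j : Fin d, Φ (Matrix.single i j 1) p.2 q.2
          = ∑ r, star (L r (i, p.2)) * L r (j, q.2) := by
        intro i j
        rw [← choi_entry Φ, hL]
        simp [Matrix.mul_apply, Matrix.conjTranspose_apply]
      have lhs_eq : (∑ i, ∑ j,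
            M (p.1, i) (q.1, j) * Φ (Matrix.single i j 1) p.2 q.2)
          = ∑ k, ∑ r, ∑ i, ∑ j,
            (star (A k (p.1, i)) * A k (q.1, j)) * (star (L r (i, p.2)) * L r (j, q.2)) := by
        rw [← sum_comm4]
        refine Finset.sum_congr rfl fun i _ => Finset.sum_congr rfl fun j _ => ?_
        rw [hMe i j, hPe i j, Finset.sum_mul_sum]
      have rhs_eq : (Bᴴ * B) p q = ∑ k : Fin n × Fin d, ∑ r : Fin d × Fin d,
          ∑ i, ∑ j,
            (star (A k (p.1, i)) * A k (q.1, j)) * (star (L r (i, p.2)) * L r (j, q.2)) := by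
        rw [Matrix.mul_apply, Fintype.sum_prod_type]
        refine Finset.sum_congr rfl fun k _ => Finset.sum_congr rfl fun r _ => ?_
        simp only [Matrix.conjTranspose_apply, hBdef, Matrix.of_apply, star_sum, star_mul']
        rw [Finset.sum_mul_sum]
        refine Finset.sum_congr rfl fun i _ => Finset.sum_congr rfl fun j _ => ?_
        ring
      rw [lhs_eq, rhs_eq]
    rw [key]
    exact Matrix.posSemidef_conjTranspose_mul_self B
end

section
/- For the map M(X) = tr(X)·1/d + α(X − Δ(X)) + β(Δ(X) − tr(X)·1/d), where Δ(X) = Σ_k E_{kk} X_{kk}, if M is a positive map then: α ≥ −1/(d−1), α ≤ 1, β ≥ −1/(d−1), and β ≤ 1. -/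
open Matrix ComplexOrder

theorem stmt_17 {d : ℕ} (hd : 2 ≤ d) (α β : ℝ)
    (M : Matrix (Fin d) (Fin d) ℂ → Matrix (Fin d) (Fin d) ℂ)
    (hM : ∀ X, M X = (X.trace / d) • (1 : Matrix (Fin d) (Fin d) ℂ)
        + (α : ℂ) • (X - Matrix.diagonal (fun k => X k k))
        + (β : ℂ) • (Matrix.diagonal (fun k => X k k)
            - (X.trace / d) • (1 : Matrix (Fin d) (Fin d) ℂ)))
    (hpos : ∀ P : Matrix (Fin d) (Fin d) ℂ, P.PosSemidef → (M P).PosSemidef) :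
    -1 / ((d : ℝ) - 1) ≤ α ∧ α ≤ 1 ∧ -1 / ((d : ℝ) - 1) ≤ β ∧ β ≤ 1 := by
  have hd0 : (0:ℝ) < d := by positivity
  have hd2 : (2:ℝ) ≤ d := by exact_mod_cast hd
  have hd1 : (0:ℝ) < (d:ℝ) - 1 := by linarith
  have hdne : (d:ℂ) ≠ 0 := by exact_mod_cast (show (d:ℝ) ≠ 0 from hd0.ne')
  set i0 : Fin d := ⟨0, by omega⟩
  set i1 : Fin d := ⟨1, by omega⟩
  -- β bounds from P = E₀₀
  set P : Matrix (Fin d) (Fin d) ℂ := Matrix.diagonal (fun k => if k = i0 then 1 else 0) with hP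
  have hPpsd : P.PosSemidef := Matrix.PosSemidef.diagonal (by intro k; dsimp; split <;> norm_num)
  have htr : P.trace = 1 := by simp [hP, Matrix.trace_diagonal]
  have hQ := hpos P hPpsd
  have hdiag : ∀ k, 0 ≤ ((M P) k k).re := by
    intro k
    have := hQ.re_dotProduct_nonneg (Pi.single k 1)
    simpa [mulVec_single, dotProduct, Pi.single_apply, apply_ite] using this
  have e0 := hdiag i0
  have e1 := hdiag i1
  rw [hM] at e0 e1
  simp [htr, hP, Matrix.diagonal_apply, Matrix.one_apply,
    show i1 ≠ i0 by simp [i0, i1, Fin.ext_iff]] at e0 e1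
  -- e0 : 0 ≤ d⁻¹ + β * (1 - d⁻¹),  e1 : β * d⁻¹ ≤ d⁻¹
  have hβ2 : β ≤ 1 := by
    have hinv : (0:ℝ) < (d:ℝ)⁻¹ := inv_pos.mpr hd0
    exact le_of_mul_le_mul_right (by linarith) hinv
  have hβ1 : -1 / ((d:ℝ) - 1) ≤ β := by
    rw [div_le_iff₀ hd1]
    have h2 := mul_nonneg hd0.le e0
    have h3 : (d:ℝ) * ((d:ℝ)⁻¹ + β * (1 - (d:ℝ)⁻¹)) = 1 + β * ((d:ℝ) - 1) := by
      field_simp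
    rw [h3] at h2
    linarith
  -- α bounds from J = all-ones matrix
  set J : Matrix (Fin d) (Fin d) ℂ := Matrix.of (fun _ _ => 1) with hJ
  have hJpsd : J.PosSemidef := by
    rw [posSemidef_iff_dotProduct_mulVec]; constructor
    · ext i j; simp [hJ, conjTranspose_apply]
    · intro x
      have : star x ⬝ᵥ J *ᵥ x = star (∑ i, x i) * (∑ i, x i) := by
        simp only [hJ, dotProduct, mulVec, Finset.mul_sum, Finset.sum_mul, of_apply,
          mul_one, one_mul, Pi.star_apply, star_sum, RCLike.star_def]
        rw [Finset.sum_comm]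
      rw [this]
      exact star_mul_self_nonneg _
  have htrJ : J.trace = d := by simp [hJ, Matrix.trace, Matrix.diag]
  have hQJ := hpos J hJpsd
  have hMJ : M J = 1 + (α:ℂ) • (J - 1) := by
    rw [hM, htrJ]
    ext i j
    by_cases h : i = j <;>
      simp [hJ, Matrix.diagonal_apply, Matrix.one_apply, h, div_self hdne]
  have t1 := hQJ.re_dotProduct_nonneg (fun _ => 1)
  rw [hMJ] at t1
  simp [dotProduct, mulVec, Matrix.add_apply, Matrix.smul_apply, Matrix.sub_apply,
    Matrix.one_apply, hJ, Finset.sum_add_distrib, Finset.sum_ite_eq, Finset.sum_sub_distrib,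
    apply_ite Complex.re, mul_sub, Finset.mul_sum, Finset.sum_const, Finset.card_univ,
    Fintype.card_fin, nsmul_eq_mul] at t1
  -- t1 : 0 ≤ d + (d * (d * α) - d * α)
  have t2 := hQJ.re_dotProduct_nonneg (Pi.single i0 1 - Pi.single i1 1)
  rw [hMJ] at t2
  simp [dotProduct, mulVec, Matrix.add_apply, Matrix.smul_apply, Matrix.sub_apply,
    Matrix.one_apply, hJ, Pi.single_apply, sub_mul, mul_sub, Finset.sum_ite_eq,
    Finset.sum_sub_distrib, show i0 ≠ i1 by simp [i0, i1, Fin.ext_iff],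
    show i1 ≠ i0 by simp [i0, i1, Fin.ext_iff]] at t2
  -- t2 : α ≤ 1 - α + 1
  have hα2 : α ≤ 1 := by linarith
  have hα1 : -1 / ((d:ℝ) - 1) ≤ α := by
    rw [div_le_iff₀ hd1]
    have h2 : 0 ≤ (d:ℝ) * (1 + α * ((d:ℝ) - 1)) := by nlinarith [t1]
    nlinarith [h2, hd0]
  exact ⟨hα1, hα2, hβ1, hβ2⟩
end
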